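/- The length of a longest induced path in a connected graph G is at most the neighborhood diversity of G. -/

import Mathlib

/-- Two vertices are nd-equivalent if they have the same neighborhoods,
except possibly for themselves. -/
def ndRel {V : Type*} (G : SimpleGraph V) (u v : V) : Prop :=
  G.neighborSet u \ {v} = G.neighborSet v \ {u}

/-- The neighborhood diversity of `G`: the number of nd-equivalence classes. -/
noncomputable def ndCount {V : Type*} (G : SimpleGraph V) : ℕ :=
  {S : Set V | ∃ v, S = {u | ndRel G u v}}.ncard

lemma support_get_eq_getVert {V : Type*} {G : SimpleGraph V} {u v : V}
    (p : G.Walk u v) (i : ℕ) (h : i < p.support.length) :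
    p.support.get ⟨i, h⟩ = p.getVert i := by
  induction p generalizing i with
  | nil =>
    cases i with
    | zero => rfl
    | succ n => simp [SimpleGraph.Walk.support_nil] at h
  | cons hadj q ih =>
    cases i with
    | zero => rfl
    | succ n =>
      rw [SimpleGraph.Walk.getVert_cons_succ]
      have h' : n < q.support.length := by
        simpa [SimpleGraph.Walk.support_cons] using h
      simpa [SimpleGraph.Walk.support_cons] using ih n h'

/-- The length of any induced path in a connected graph `G` is at most the
neighborhood diversity of `G`. -/
theorem induced_path_length_le_nd {V : Type*} [Fintype V]
    (G : SimpleGraph V) (hconn : G.Connected) {u v : V}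
    (p : G.Walk u v) (hp : p.IsPath)
    (hind : ∀ i j : Fin p.support.length, (i : ℕ) + 1 < (j : ℕ) →
      ¬ G.Adj (p.support.get i) (p.support.get j)) :
    p.length ≤ ndCount G := by
  classical
  set S : Set (Set V) := {S : Set V | ∃ v, S = {u | ndRel G u v}} with hS
  have hlen : p.support.length = p.length + 1 := by
    simp [SimpleGraph.Walk.length_support]
  have hnodup := hp.support_nodup
  -- key: distinct classes for distinct indices < p.length
  have key : ∀ i j : ℕ, i < j → j < p.length →
      ¬ ndRel G (p.getVert i) (p.getVert j) := by
    intro i j hij hj hrel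
    have hadj : G.Adj (p.getVert j) (p.getVert (j + 1)) :=
      p.adj_getVert_succ hj
    have hne : p.getVert (j + 1) ≠ p.getVert i := by
      intro heq
      have h1 : j + 1 < p.support.length := by omega
      have h2 : i < p.support.length := by omega
      have := List.Nodup.get_inj_iff hnodup (i := ⟨j+1, h1⟩) (j := ⟨i, h2⟩)
      rw [support_get_eq_getVert, support_get_eq_getVert] at this
      have := (this.mp heq)
      simp at this; omega
    have hmem : p.getVert (j + 1) ∈ G.neighborSet (p.getVert j) \ {p.getVert i} := by
      exact ⟨hadj, hne⟩
    unfold ndRel at hrel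
    rw [← hrel] at hmem
    have hadj' : G.Adj (p.getVert i) (p.getVert (j + 1)) := hmem.1
    have h1 : j + 1 < p.support.length := by omega
    have h2 : i < p.support.length := by omega
    have := hind ⟨i, h2⟩ ⟨j+1, h1⟩ (by simp; omega)
    rw [support_get_eq_getVert, support_get_eq_getVert] at this
    exact this hadj'
  -- the map from Fin p.length to classes
  have hrefl : ∀ w : V, ndRel G w w := fun w => rfl
  let f : Fin p.length → S := fun i =>
    ⟨{w | ndRel G w (p.getVert i)}, ⟨p.getVert i, rfl⟩⟩
  have hinj : Function.Injective f := by
    intro i j hij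
    by_contra hne
    have hij' : ({w | ndRel G w (p.getVert i)} : Set V)
        = {w | ndRel G w (p.getVert j)} := congrArg Subtype.val hij
    rcases lt_or_gt_of_ne (fun h : i = j => hne h) with h | h
    · have : p.getVert i ∈ ({w | ndRel G w (p.getVert i)} : Set V) := hrefl _
      rw [hij'] at this
      exact key i j h j.isLt this
    · have : p.getVert j ∈ ({w | ndRel G w (p.getVert j)} : Set V) := hrefl _
      rw [← hij'] at this
      exact key j i h i.isLt this
  have hfin : S.Finite := Set.Finite.subset (Set.finite_univ) (Set.subset_univ _)
  have : Nat.card (Fin p.length) ≤ Nat.card S := by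
    have : Finite S := hfin
    exact Nat.card_le_card_of_injective f hinj
  rw [Nat.card_coe_set_eq] at this
  simpa [ndCount] using this
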